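/- Let A be the set of positive integers whose decimal digits are exactly two 4s, one 7, and any number of 1s (in any order). Then no element of A is divisible by 2^8; moreover 111744 ∈ A and 2^7 divides 111744, so 2^7 is the maximal power of two dividing any element of A. -/

import Mathlib

/-- Little-endian value of a digit list. -/
def val447 : List ℕ → ℕ
  | [] => 0
  | d :: L => d + 10 * val447 L

lemma val447_eq_ofDigits (L : List ℕ) : Nat.ofDigits 10 L = val447 L := by
  induction L with
  | nil => simp [val447]
  | cons d t ih => simp [val447, Nat.ofDigits_cons, ih]

/-- Search over all digit strings (little-endian, digits in {1,4,7}, with budgets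
`c4` fours and `c7` sevens, up to `n` more digits, current multiplier `m` and
partial value `r`, both mod 256) for one whose value is divisible by 256. -/
def anyBad447 : ℕ → ℕ → ℕ → ℕ → ℕ → Bool
  | 0, _, _, _, _ => false
  | n + 1, c4, c7, m, r =>
      (((r + 1 * m) % 256 == 0) || anyBad447 n c4 c7 (m * 10 % 256) ((r + 1 * m) % 256))
      || (decide (0 < c4) &&
          (((r + 4 * m) % 256 == 0) || anyBad447 n (c4 - 1) c7 (m * 10 % 256) ((r + 4 * m) % 256)))
      || (decide (0 < c7) &&
          (((r + 7 * m) % 256 == 0) || anyBad447 n c4 (c7 - 1) (m * 10 % 256) ((r + 7 * m) % 256)))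

lemma anyBad447_spec : ∀ (L : List ℕ) (n c4 c7 m r : ℕ),
    anyBad447 n c4 c7 (m % 256) (r % 256) = false →
    (∀ d ∈ L, d = 1 ∨ d = 4 ∨ d = 7) → L.count 4 ≤ c4 → L.count 7 ≤ c7 →
    L.length ≤ n → L ≠ [] → (r + m * val447 L) % 256 ≠ 0 := by
  intro L
  induction L with
  | nil => intro _ _ _ _ _ _ _ _ _ _ hne; exact absurd rfl hne
  | cons d t ih =>
    intro n c4 c7 m r h hd hc4 hc7 hlen _
    match n with
    | 0 => simp at hlen
    | n + 1 =>
      rw [anyBad447] at h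
      simp only [Bool.or_eq_false_iff, Bool.and_eq_false_iff, decide_eq_false_iff_not,
        beq_eq_false_iff_ne, ne_eq] at h
      obtain ⟨⟨⟨h1a, h1b⟩, h4'⟩, h7'⟩ := h
      have hmem := hd d List.mem_cons_self
      have hlent : t.length ≤ n := by simpa using hlen
      have hdt : ∀ x ∈ t, x = 1 ∨ x = 4 ∨ x = 7 := fun x hx => hd x (List.mem_cons_of_mem _ hx)
      have e1 : m % 256 * 10 % 256 = m * 10 % 256 := by omega
      have step : ∀ (dd c4' c7' : ℕ), d = dd →
          (r % 256 + dd * (m % 256)) % 256 = (r + dd * m) % 256 →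
          ((r % 256 + dd * (m % 256)) % 256 ≠ 0) →
          anyBad447 n c4' c7' (m % 256 * 10 % 256) ((r % 256 + dd * (m % 256)) % 256) = false →
          t.count 4 ≤ c4' → t.count 7 ≤ c7' →
          (r + m * val447 (d :: t)) % 256 ≠ 0 := by
        intro dd c4' c7' hdd e2 hz hrec hc4' hc7'
        rw [e1, e2] at hrec
        rw [e2] at hz
        have hval : val447 (d :: t) = dd + 10 * val447 t := by rw [hdd]; rfl
        rw [hval]
        rcases eq_or_ne t [] with ht | ht
        · subst ht
          have e : r + m * (dd + 10 * val447 []) = r + dd * m := by simp [val447]; ring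
          rw [e]; exact hz
        · have := ih n c4' c7' (m * 10) (r + dd * m) hrec hdt hc4' hc7' hlent ht
          have e3 : r + m * (dd + 10 * val447 t) = r + dd * m + m * 10 * val447 t := by ring
          rw [e3]
          exact this
      rcases hmem with h1 | h4 | h7
      · have hcc4 : t.count 4 ≤ c4 := by simpa [List.count_cons, h1] using hc4
        have hcc7 : t.count 7 ≤ c7 := by simpa [List.count_cons, h1] using hc7
        exact step 1 c4 c7 h1 (by omega) h1a h1b hcc4 hcc7
      · have hcc4 : t.count 4 + 1 ≤ c4 := by simpa [List.count_cons, h4] using hc4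
        have hcc7 : t.count 7 ≤ c7 := by simpa [List.count_cons, h4] using hc7
        rcases h4' with hcon | ⟨ha, hb⟩
        · omega
        · exact step 4 (c4 - 1) c7 h4 (by omega) ha hb (by omega) hcc7
      · have hcc4 : t.count 4 ≤ c4 := by simpa [List.count_cons, h7] using hc4
        have hcc7 : t.count 7 + 1 ≤ c7 := by simpa [List.count_cons, h7] using hc7
        rcases h7' with hcon | ⟨ha, hb⟩
        · omega
        · exact step 7 c4 (c7 - 1) h7 (by omega) ha hb hcc4 (by omega)

lemma check447 : anyBad447 8 2 1 (1 % 256) (0 % 256) = false := by decide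

lemma key447 (L : List ℕ) (hne : L ≠ [])
    (hd : ∀ d ∈ L, d = 1 ∨ d = 4 ∨ d = 7)
    (h4 : L.count 4 ≤ 2) (h7 : L.count 7 ≤ 1) (hlen : L.length ≤ 8) :
    ¬ (2 ^ 8 ∣ Nat.ofDigits 10 L) := by
  have := anyBad447_spec L 8 2 1 1 0 check447 hd h4 h7 hlen hne
  rw [val447_eq_ofDigits]
  intro hdvd
  have h256 : (256 : ℕ) ∣ val447 L := by norm_num at hdvd; exact hdvd
  omega

/-- The set of positive integers whose decimal digits are exactly two `4`s,
one `7`, and any number of `1`s. -/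
def A447 : Set ℕ :=
  {x | 0 < x ∧ (Nat.digits 10 x).count 4 = 2 ∧ (Nat.digits 10 x).count 7 = 1 ∧
       ∀ d ∈ Nat.digits 10 x, d = 1 ∨ d = 4 ∨ d = 7}

/-- No element of `A447` is divisible by `2^8`; moreover `111744 ∈ A447` and
`2^7 ∣ 111744`, so `2^7` is the maximal power of two dividing any element. -/
theorem maxPowerOfTwo_A447 :
    (∀ x ∈ A447, ¬ 2 ^ 8 ∣ x) ∧ 111744 ∈ A447 ∧ 2 ^ 7 ∣ 111744 := by
  have hdig : Nat.digits 10 111744 = [4, 4, 7, 1, 1, 1] := by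
    simp [Nat.digits_def' (by norm_num : (1:ℕ) < 10)]
  refine ⟨?_, ⟨by norm_num, by rw [hdig]; rfl, by rw [hdig]; rfl, by rw [hdig]; decide⟩,
    by norm_num⟩
  rintro x ⟨hx, h4, h7, hd⟩ hdvd
  set D := Nat.digits 10 x with hD
  set L1 := D.take 8 with hL1
  have hsplit : x = Nat.ofDigits 10 L1 + 10 ^ L1.length * Nat.ofDigits 10 (D.drop 8) := by
    conv_lhs => rw [← Nat.ofDigits_digits 10 x, ← hD, ← List.take_append_drop 8 D]
    rw [Nat.ofDigits_append]
  have hd1 : ∀ d ∈ L1, d = 1 ∨ d = 4 ∨ d = 7 := fun d hdm => hd d (List.mem_of_mem_take hdm)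
  have hc4 : L1.count 4 ≤ 2 := h4 ▸ ((List.take_sublist 8 D).count_le _)
  have hc7 : L1.count 7 ≤ 1 := h7 ▸ ((List.take_sublist 8 D).count_le _)
  have hlen : L1.length ≤ 8 := by simp [hL1]
  have hDne : D ≠ [] := by
    rw [hD]
    exact Nat.digits_ne_nil_iff_ne_zero.mpr hx.ne'
  have hne : L1 ≠ [] := by
    rw [hL1]
    intro h
    rcases List.take_eq_nil_iff.mp h with h' | h'
    · omega
    · exact hDne h'
  apply key447 L1 hne hd1 hc4 hc7 hlen
  rcases le_or_gt D.length 8 with hle | hlt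
  · rw [hL1, List.take_of_length_le hle, hD, Nat.ofDigits_digits]
    exact hdvd
  · have hlen8 : L1.length = 8 := by rw [hL1, List.length_take]; omega
    have hdvd2 : 2 ^ 8 ∣ 10 ^ L1.length * Nat.ofDigits 10 (D.drop 8) := by
      rw [hlen8]
      exact Dvd.dvd.mul_right (by norm_num) _
    have := Nat.dvd_sub hdvd hdvd2
    rwa [hsplit, Nat.add_sub_cancel] at this
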